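/- For every r ≥ 1, the kernel of the linear map îd_r : M_r(ℂ)⊗ℂ^r → ℂ^r determined by a⊗η ↦ aη equals the linear span of the simple tensors a⊗η with a ∈ M_r(ℂ) positive semidefinite and aη = 0; equivalently, this span N_{id_r} has dimension r³ − r. -/

import Mathlib

open Matrix ComplexOrder

noncomputable section

/-- A linear map between matrix algebras is positive if it sends positive
semidefinite matrices to positive semidefinite matrices. -/
def IsPosMap {m n : ℕ} (φ : Matrix (Fin m) (Fin m) ℂ →ₗ[ℂ] Matrix (Fin n) (Fin n) ℂ) : Prop :=
  ∀ a : Matrix (Fin m) (Fin m) ℂ, a.PosSemidef → (φ a).PosSemidef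

/-- A positive linear map `φ` is exposed (generates an exposed ray of the cone of
positive maps) if every positive map `ψ` such that `⟨η, φ(a) η⟩ = 0` implies
`⟨η, ψ(a) η⟩ = 0` (for `a` positive semidefinite) is a nonnegative multiple of `φ`. -/
def IsExposedMap {m n : ℕ} (φ : Matrix (Fin m) (Fin m) ℂ →ₗ[ℂ] Matrix (Fin n) (Fin n) ℂ) :
    Prop :=
  IsPosMap φ ∧
    ∀ ψ : Matrix (Fin m) (Fin m) ℂ →ₗ[ℂ] Matrix (Fin n) (Fin n) ℂ, IsPosMap ψ →
      (∀ a : Matrix (Fin m) (Fin m) ℂ, a.PosSemidef → ∀ η : Fin n → ℂ,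
        star η ⬝ᵥ (φ a) *ᵥ η = 0 → star η ⬝ᵥ (ψ a) *ᵥ η = 0) →
      ∃ c : ℝ, 0 ≤ c ∧ ψ = (c : ℂ) • φ

/-- The map `Ad_s : x ↦ s* x s`. -/
def adMap {m n : ℕ} (s : Matrix (Fin m) (Fin n) ℂ) :
    Matrix (Fin m) (Fin m) ℂ →ₗ[ℂ] Matrix (Fin n) (Fin n) ℂ where
  toFun x := sᴴ * x * s
  map_add' x y := by simp [Matrix.add_mul, Matrix.mul_add]
  map_smul' c x := by simp [Matrix.smul_mul, Matrix.mul_smul]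

/-- The transpose map on matrices, as a linear map. -/
def transposeLM (m : ℕ) : Matrix (Fin m) (Fin m) ℂ →ₗ[ℂ] Matrix (Fin m) (Fin m) ℂ where
  toFun x := xᵀ
  map_add' x y := Matrix.transpose_add x y
  map_smul' c x := by simp

/-- Woronowicz's map `φ̂ : M_m(ℂ) ⊗ ℂ^n → ℂ^n`, determined by `a ⊗ η ↦ φ(a) η`. -/
def hatMap {m n : ℕ} (φ : Matrix (Fin m) (Fin m) ℂ →ₗ[ℂ] Matrix (Fin n) (Fin n) ℂ) :
    TensorProduct ℂ (Matrix (Fin m) (Fin m) ℂ) (Fin n → ℂ) →ₗ[ℂ] (Fin n → ℂ) :=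
  TensorProduct.lift (Matrix.toLin'.toLinearMap.comp φ)

/-- The subspace `N_φ ⊆ M_m(ℂ) ⊗ ℂ^n` spanned by the simple tensors `a ⊗ η`
with `a` positive semidefinite and `φ(a) η = 0`. -/
def Nspace {m n : ℕ} (φ : Matrix (Fin m) (Fin m) ℂ →ₗ[ℂ] Matrix (Fin n) (Fin n) ℂ) :
    Submodule ℂ (TensorProduct ℂ (Matrix (Fin m) (Fin m) ℂ) (Fin n → ℂ)) :=
  Submodule.span ℂ
    {x | ∃ (a : Matrix (Fin m) (Fin m) ℂ) (η : Fin n → ℂ),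
      a.PosSemidef ∧ (φ a) *ᵥ η = 0 ∧ x = a ⊗ₜ[ℂ] η}

namespace WorAux
variable {r : ℕ}

def outer (u v : Fin r → ℂ) : Matrix (Fin r) (Fin r) ℂ := Matrix.vecMulVec u (star v)

lemma outer_mulVec (u v x : Fin r → ℂ) : outer u v *ᵥ x = (star v ⬝ᵥ x) • u := by
  funext i
  simp [outer, Matrix.mulVec, Matrix.vecMulVec_apply, dotProduct, Finset.sum_mul,
    Finset.mul_sum, mul_comm, mul_left_comm, mul_assoc]

lemma outer_add_left (u u' v : Fin r → ℂ) : outer (u + u') v = outer u v + outer u' v := by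
  ext i j; simp [outer, Matrix.vecMulVec_apply, add_mul]

lemma outer_sub_left (u u' v : Fin r → ℂ) : outer (u - u') v = outer u v - outer u' v := by
  ext i j; simp [outer, Matrix.vecMulVec_apply, sub_mul]

lemma outer_add_right (u v v' : Fin r → ℂ) : outer u (v + v') = outer u v + outer u v' := by
  ext i j; simp [outer, Matrix.vecMulVec_apply, mul_add]

lemma outer_sub_right (u v v' : Fin r → ℂ) : outer u (v - v') = outer u v - outer u v' := by
  ext i j; simp [outer, Matrix.vecMulVec_apply, mul_sub]

lemma outer_smul_left (c : ℂ) (u v : Fin r → ℂ) : outer (c • u) v = c • outer u v := by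
  ext i j; simp [outer, Matrix.vecMulVec_apply]; ring

lemma outer_smul_right (c : ℂ) (u v : Fin r → ℂ) :
    outer u (c • v) = (starRingEnd ℂ c) • outer u v := by
  ext i j; simp [outer, Matrix.vecMulVec_apply]; ring

lemma outer_zero_left (v : Fin r → ℂ) : outer 0 v = 0 := by
  ext i j; simp [outer, Matrix.vecMulVec_apply]

lemma outer_zero_right (u : Fin r → ℂ) : outer u 0 = 0 := by
  ext i j; simp [outer, Matrix.vecMulVec_apply]

lemma outer_posSemidef (u : Fin r → ℂ) : (outer u u).PosSemidef := by
  rw [Matrix.posSemidef_iff_dotProduct_mulVec]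
  constructor
  · ext i j; simp [Matrix.conjTranspose_apply, outer, Matrix.vecMulVec_apply, mul_comm]
  · intro x
    rw [outer_mulVec, dotProduct_smul, smul_eq_mul]
    have hx : star x ⬝ᵥ u = star (star u ⬝ᵥ x) := by
      conv_lhs => rw [← star_star u]
      rw [star_dotProduct_star]
    rw [hx]
    exact mul_star_self_nonneg _

abbrev NN (r : ℕ) := Nspace (LinearMap.id : Matrix (Fin r) (Fin r) ℂ →ₗ[ℂ] Matrix (Fin r) (Fin r) ℂ)

lemma mem_N (w η : Fin r → ℂ) (h : star w ⬝ᵥ η = 0) : (outer w w) ⊗ₜ[ℂ] η ∈ NN r :=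
  Submodule.subset_span ⟨outer w w, η, outer_posSemidef w, by
    rw [LinearMap.id_apply, outer_mulVec, h, zero_smul], rfl⟩

lemma perp_mem (u ξ η : Fin r → ℂ) (hu : star u ⬝ᵥ η = 0) (hξ : star ξ ⬝ᵥ η = 0) :
    outer u ξ ⊗ₜ[ℂ] η ∈ NN r := by
  have h1 : star (u + ξ) ⬝ᵥ η = 0 := by
    simp [star_add, add_dotProduct, hu, hξ]
  have h2 : star (u - ξ) ⬝ᵥ η = 0 := by
    simp [star_sub, sub_dotProduct, hu, hξ]
  have h3 : star (u + Complex.I • ξ) ⬝ᵥ η = 0 := by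
    simp [star_add, star_smul, add_dotProduct, smul_dotProduct, hu, hξ]
  have h4 : star (u - Complex.I • ξ) ⬝ᵥ η = 0 := by
    simp [star_sub, star_smul, sub_dotProduct, smul_dotProduct, hu, hξ]
  have hid : outer u ξ = (4:ℂ)⁻¹ • (outer (u+ξ) (u+ξ) + Complex.I • outer (u + Complex.I•ξ) (u+Complex.I•ξ)
      - outer (u-ξ) (u-ξ) - Complex.I • outer (u - Complex.I•ξ) (u - Complex.I•ξ)) := by
    simp only [outer_add_left, outer_add_right, outer_sub_left, outer_sub_right,
      outer_smul_left, outer_smul_right, Complex.conj_I]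
    match_scalars <;> (ring_nf; try simp [Complex.I_sq]) <;> try ring1
  rw [hid, ← TensorProduct.smul_tmul']
  refine Submodule.smul_mem _ _ ?_
  rw [TensorProduct.sub_tmul, TensorProduct.sub_tmul, TensorProduct.add_tmul,
    ← TensorProduct.smul_tmul', ← TensorProduct.smul_tmul']
  exact sub_mem (sub_mem (add_mem (mem_N _ _ h1) (Submodule.smul_mem _ _ (mem_N _ _ h3)))
    (mem_N _ _ h2)) (Submodule.smul_mem _ _ (mem_N _ _ h4))

lemma conj_dot (x y : Fin r → ℂ) : starRingEnd ℂ (star x ⬝ᵥ y) = star y ⬝ᵥ x := by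
  have := star_dotProduct_star (v := y) (w := star x)
  rw [star_star] at this
  exact this.symm

lemma eta_mem (η ξ : Fin r → ℂ) (hη : η ≠ 0) (hξ0 : ξ ≠ 0) (hperp : star ξ ⬝ᵥ η = 0) :
    outer η ξ ⊗ₜ[ℂ] η ∈ NN r := by
  obtain ⟨c, hcB, hc0, hc⟩ : ∃ c : ℂ, c * (star η ⬝ᵥ η) = star ξ ⬝ᵥ ξ ∧ c ≠ 0 ∧
      starRingEnd ℂ c = c := by
    have hB : (star η ⬝ᵥ η) ≠ 0 := fun h => hη (dotProduct_star_self_eq_zero.mp h)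
    have hA : (star ξ ⬝ᵥ ξ) ≠ 0 := fun h => hξ0 (dotProduct_star_self_eq_zero.mp h)
    refine ⟨(star ξ ⬝ᵥ ξ) / (star η ⬝ᵥ η), div_mul_cancel₀ _ hB, div_ne_zero hA hB, ?_⟩
    rw [map_div₀, conj_dot, conj_dot]
  have hperp' : star η ⬝ᵥ ξ = 0 := by
    have := congrArg (starRingEnd ℂ) hperp
    rwa [conj_dot, map_zero] at this
  have hGmem : ∀ (t a : ℂ), starRingEnd ℂ a = t →
      outer (ξ - (a*c)•η) (ξ - (a*c)•η) ⊗ₜ[ℂ] (η + t•ξ) ∈ NN r := by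
    intro t a hta
    refine mem_N _ _ ?_
    simp only [star_sub, star_smul, sub_dotProduct, dotProduct_add, smul_dotProduct,
      dotProduct_smul, smul_eq_mul, hperp, hperp']
    simp only [Complex.star_def, _root_.map_mul, hta, hc]
    linear_combination (-t) * hcB
  set I : ℂ := Complex.I with hI_def
  have m1 := hGmem 1 1 (by simp)
  have m2 := hGmem (-1) (-1) (by simp)
  have m3 := hGmem 2 2 (Complex.conj_ofNat 2)
  have m4 := hGmem (-2) (-2) (by rw [map_neg, Complex.conj_ofNat])
  have m5 := hGmem I (-I) (by simp [hI_def])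
  have m6 := hGmem (-I) I (by simp [hI_def])
  have m7 := hGmem (2*I) (-(2*I)) (by rw [hI_def, map_neg, _root_.map_mul, Complex.conj_ofNat, Complex.conj_I]; ring)
  have m8 := hGmem (-(2*I)) (2*I) (by rw [hI_def, _root_.map_mul, Complex.conj_ofNat, Complex.conj_I]; ring)
  have key : ((24:ℂ) * c) • (outer η ξ ⊗ₜ[ℂ] η) =
      -( (8:ℂ) • (outer (ξ - ((1:ℂ)*c)•η) (ξ - ((1:ℂ)*c)•η) ⊗ₜ[ℂ] (η + (1:ℂ)•ξ))
        - (8:ℂ) • (outer (ξ - ((-1:ℂ)*c)•η) (ξ - ((-1:ℂ)*c)•η) ⊗ₜ[ℂ] (η + (-1:ℂ)•ξ))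
        - (outer (ξ - ((2:ℂ)*c)•η) (ξ - ((2:ℂ)*c)•η) ⊗ₜ[ℂ] (η + (2:ℂ)•ξ))
        + (outer (ξ - ((-2:ℂ)*c)•η) (ξ - ((-2:ℂ)*c)•η) ⊗ₜ[ℂ] (η + (-2:ℂ)•ξ))
        + ((8:ℂ)*I) • (outer (ξ - ((-I)*c)•η) (ξ - ((-I)*c)•η) ⊗ₜ[ℂ] (η + I•ξ))
        - ((8:ℂ)*I) • (outer (ξ - (I*c)•η) (ξ - (I*c)•η) ⊗ₜ[ℂ] (η + (-I)•ξ))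
        - I • (outer (ξ - ((-(2*I))*c)•η) (ξ - ((-(2*I))*c)•η) ⊗ₜ[ℂ] (η + (2*I)•ξ))
        + I • (outer (ξ - ((2*I)*c)•η) (ξ - ((2*I)*c)•η) ⊗ₜ[ℂ] (η + (-(2*I))•ξ))) := by
    simp only [outer_sub_left, outer_sub_right, outer_smul_left, outer_smul_right,
      _root_.map_mul, map_neg, _root_.map_one, Complex.conj_ofNat, hc, hI_def, Complex.conj_I]
    simp only [TensorProduct.add_tmul, TensorProduct.sub_tmul, TensorProduct.tmul_add,
      TensorProduct.tmul_smul, ← TensorProduct.smul_tmul']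
    match_scalars <;> (ring_nf; try simp [Complex.I_sq]) <;> try ring1
  have h24 : ((24:ℂ) * c) ≠ 0 := mul_ne_zero (by norm_num) hc0
  have hx : outer η ξ ⊗ₜ[ℂ] η
      = ((24:ℂ)*c)⁻¹ • (((24:ℂ) * c) • (outer η ξ ⊗ₜ[ℂ] η)) := by
    rw [smul_smul, inv_mul_cancel₀ h24, one_smul]
  rw [hx, key]
  refine Submodule.smul_mem _ _ (Submodule.neg_mem _ ?_)
  exact add_mem (sub_mem (sub_mem (add_mem (add_mem (sub_mem (sub_mem
    (Submodule.smul_mem _ _ m1) (Submodule.smul_mem _ _ m2)) m3) m4)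
    (Submodule.smul_mem _ _ m5)) (Submodule.smul_mem _ _ m6))
    (Submodule.smul_mem _ _ m7)) (Submodule.smul_mem _ _ m8)

lemma star_single (k : Fin r) : star ((Pi.single k 1 : Fin r → ℂ)) = (Pi.single k 1 : Fin r → ℂ) := by
  funext i
  simp [Pi.single_apply, apply_ite (starRingEnd ℂ)]

lemma single_dot (k : Fin r) (x : Fin r → ℂ) : star ((Pi.single k 1 : Fin r → ℂ)) ⬝ᵥ x = x k := by
  rw [star_single, single_dotProduct, one_mul]

lemma outer_mem (v ξ η : Fin r → ℂ) (hξη : star ξ ⬝ᵥ η = 0) :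
    outer v ξ ⊗ₜ[ℂ] η ∈ NN r := by
  by_cases hη : η = 0
  · rw [hη, TensorProduct.tmul_zero]; exact zero_mem _
  by_cases hξ : ξ = 0
  · rw [hξ, outer_zero_right, TensorProduct.zero_tmul]; exact zero_mem _
  have hB : (star η ⬝ᵥ η) ≠ 0 := fun h => hη (dotProduct_star_self_eq_zero.mp h)
  set α : ℂ := (star η ⬝ᵥ v) / (star η ⬝ᵥ η) with hα_def
  have hα : starRingEnd ℂ α = (star v ⬝ᵥ η) / (star η ⬝ᵥ η) := by
    rw [hα_def, map_div₀, conj_dot, conj_dot]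
  have hu : star (v - α • η) ⬝ᵥ η = 0 := by
    simp only [star_sub, star_smul, sub_dotProduct, smul_dotProduct, smul_eq_mul,
      Complex.star_def, hα]
    rw [div_mul_cancel₀ _ hB, sub_self]
  have hv : v = (v - α • η) + α • η := by abel
  rw [hv, outer_add_left, outer_smul_left, TensorProduct.add_tmul, ← TensorProduct.smul_tmul']
  exact add_mem (perp_mem _ ξ η hu hξη) (Submodule.smul_mem _ _ (eta_mem η ξ hη hξ hξη))

lemma col_decomp (b : Matrix (Fin r) (Fin r) ℂ) :
    b = ∑ k, outer (b *ᵥ (Pi.single k 1 : Fin r → ℂ)) ((Pi.single k 1 : Fin r → ℂ)) := by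
  ext i j
  simp [outer, Matrix.vecMulVec_apply, Matrix.mulVec_single, star_single, Pi.single_apply,
    Matrix.sum_apply, mul_ite, mul_one, mul_zero, Finset.sum_ite_eq, Finset.sum_ite_eq']

def outerL (v : Fin r → ℂ) : (Fin r → ℂ) →ₗ[ℂ] Matrix (Fin r) (Fin r) ℂ where
  toFun u := outer u v
  map_add' x y := outer_add_left x y v
  map_smul' c x := outer_smul_left c x v

lemma sum_form (w : Fin r → (Fin r → ℂ)) (i0 j : Fin r) :
    (∑ k, outer (w k) ((Pi.single k 1 : Fin r → ℂ))) ⊗ₜ[ℂ] ((Pi.single j 1 : Fin r → ℂ))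
      - outer (w j) ((Pi.single i0 1 : Fin r → ℂ)) ⊗ₜ[ℂ] ((Pi.single i0 1 : Fin r → ℂ)) ∈ NN r := by
  rw [TensorProduct.sum_tmul, ← Finset.sum_erase_add _ _ (Finset.mem_univ j), add_sub_assoc]
  refine add_mem (Submodule.sum_mem _ fun k hk => outer_mem _ _ _ ?_) ?_
  · rw [single_dot, Pi.single_apply, if_neg]
    exact fun h => (Finset.mem_erase.mp hk).1 (h.symm ▸ rfl)
  by_cases hji : j = i0
  · rw [hji, sub_self]; exact zero_mem _
  have key : outer (w j) ((Pi.single j 1 : Fin r → ℂ)) ⊗ₜ[ℂ] ((Pi.single j 1 : Fin r → ℂ))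
        - outer (w j) ((Pi.single i0 1 : Fin r → ℂ)) ⊗ₜ[ℂ] ((Pi.single i0 1 : Fin r → ℂ))
      = outer (w j) ((Pi.single j 1 : Fin r → ℂ) - (Pi.single i0 1 : Fin r → ℂ)) ⊗ₜ[ℂ] ((Pi.single j 1 : Fin r → ℂ) + (Pi.single i0 1 : Fin r → ℂ))
        - outer (w j) ((Pi.single j 1 : Fin r → ℂ)) ⊗ₜ[ℂ] ((Pi.single i0 1 : Fin r → ℂ))
        + outer (w j) ((Pi.single i0 1 : Fin r → ℂ)) ⊗ₜ[ℂ] ((Pi.single j 1 : Fin r → ℂ)) := by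
    simp only [outer_sub_right, TensorProduct.tmul_add, TensorProduct.sub_tmul]
    abel
  rw [key]
  refine add_mem (sub_mem (outer_mem _ _ _ ?_) (outer_mem _ _ _ ?_)) (outer_mem _ _ _ ?_)
  · rw [star_sub, sub_dotProduct, single_dot, single_dot]
    simp [Pi.single_apply, hji, Ne.symm hji]
  · rw [single_dot, Pi.single_apply]; simp [hji, Ne.symm hji]
  · rw [single_dot, Pi.single_apply]; simp [hji, Ne.symm hji]

lemma basis_mem (b : Matrix (Fin r) (Fin r) ℂ) (i0 j : Fin r) :
    b ⊗ₜ[ℂ] ((Pi.single j 1 : Fin r → ℂ))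
      - outer (b *ᵥ (Pi.single j 1 : Fin r → ℂ)) ((Pi.single i0 1 : Fin r → ℂ)) ⊗ₜ[ℂ] ((Pi.single i0 1 : Fin r → ℂ)) ∈ NN r := by
  have := sum_form (fun k => b *ᵥ (Pi.single k 1 : Fin r → ℂ)) i0 j
  rwa [← col_decomp b] at this

abbrev hatId (r : ℕ) := hatMap (LinearMap.id : Matrix (Fin r) (Fin r) ℂ →ₗ[ℂ] Matrix (Fin r) (Fin r) ℂ)

lemma hat_tmul (b : Matrix (Fin r) (Fin r) ℂ) (η : Fin r → ℂ) :
    hatId r (b ⊗ₜ[ℂ] η) = b *ᵥ η := by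
  simp [hatId, hatMap, TensorProduct.lift.tmul, Matrix.toLin'_apply]

lemma pi_decomp (η : Fin r → ℂ) : η = ∑ j, η j • (Pi.single j 1 : Fin r → ℂ) := by
  funext i
  simp [Finset.sum_apply, Pi.single_apply]

lemma main_sub (i0 : Fin r) (x : TensorProduct ℂ (Matrix (Fin r) (Fin r) ℂ) (Fin r → ℂ)) :
    x - outer (hatId r x) ((Pi.single i0 1 : Fin r → ℂ)) ⊗ₜ[ℂ] ((Pi.single i0 1 : Fin r → ℂ)) ∈ NN r := by
  induction x using TensorProduct.induction_on with
  | zero => rw [map_zero, outer_zero_left, TensorProduct.zero_tmul, sub_zero]; exact zero_mem _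
  | tmul b η =>
    rw [hat_tmul]
    set Φ : (Fin r → ℂ) →ₗ[ℂ] TensorProduct ℂ (Matrix (Fin r) (Fin r) ℂ) (Fin r → ℂ) :=
      (TensorProduct.mk ℂ _ _ b) -
        (((TensorProduct.mk ℂ (Matrix (Fin r) (Fin r) ℂ) (Fin r → ℂ)).flip
          ((Pi.single i0 1 : Fin r → ℂ))).comp ((outerL ((Pi.single i0 1 : Fin r → ℂ))).comp b.mulVecLin)) with hΦ_def
    have hΦ : ∀ y, Φ y = b ⊗ₜ[ℂ] y - outer (b *ᵥ y) ((Pi.single i0 1 : Fin r → ℂ)) ⊗ₜ[ℂ] ((Pi.single i0 1 : Fin r → ℂ)) :=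
      fun y => rfl
    rw [← hΦ η]
    have hη2 := pi_decomp η
    rw [show η = ∑ j, η j • (Pi.single j 1 : Fin r → ℂ) from hη2, map_sum]
    refine Submodule.sum_mem _ fun j _ => ?_
    rw [_root_.map_smul]
    exact Submodule.smul_mem _ _ (by rw [hΦ]; exact basis_mem b i0 j)
  | add x y hx hy =>
    have : (x + y) - outer (hatId r (x+y)) ((Pi.single i0 1 : Fin r → ℂ)) ⊗ₜ[ℂ] ((Pi.single i0 1 : Fin r → ℂ))
        = (x - outer (hatId r x) ((Pi.single i0 1 : Fin r → ℂ)) ⊗ₜ[ℂ] ((Pi.single i0 1 : Fin r → ℂ)))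
          + (y - outer (hatId r y) ((Pi.single i0 1 : Fin r → ℂ)) ⊗ₜ[ℂ] ((Pi.single i0 1 : Fin r → ℂ))) := by
      rw [map_add, outer_add_left, TensorProduct.add_tmul]
      abel
    rw [this]
    exact add_mem hx hy


theorem final (r : ℕ) (hr : 1 ≤ r) :
    LinearMap.ker
        (hatMap (LinearMap.id : Matrix (Fin r) (Fin r) ℂ →ₗ[ℂ] Matrix (Fin r) (Fin r) ℂ)) =
      Nspace (LinearMap.id : Matrix (Fin r) (Fin r) ℂ →ₗ[ℂ] Matrix (Fin r) (Fin r) ℂ) ∧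
    Module.finrank ℂ
        (Nspace (LinearMap.id : Matrix (Fin r) (Fin r) ℂ →ₗ[ℂ] Matrix (Fin r) (Fin r) ℂ)) =
      r ^ 3 - r := by
  have i0 : Fin r := ⟨0, hr⟩
  have hker_le : LinearMap.ker (hatId r) ≤ NN r := by
    intro x hx
    have h := main_sub i0 x
    rw [LinearMap.mem_ker] at hx
    rwa [hx, outer_zero_left, TensorProduct.zero_tmul, sub_zero] at h
  have hle : NN r ≤ LinearMap.ker (hatId r) := by
    rw [NN, Nspace, Submodule.span_le]
    rintro x ⟨a, η, hpos, h0, rfl⟩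
    rw [SetLike.mem_coe, LinearMap.mem_ker, hat_tmul]
    simpa using h0
  have heq : LinearMap.ker (hatId r) = NN r := le_antisymm hker_le hle
  have hsurj : Function.Surjective (hatId r) := by
    intro u
    refine ⟨outer u (Pi.single i0 1 : Fin r → ℂ) ⊗ₜ[ℂ] (Pi.single i0 1 : Fin r → ℂ), ?_⟩
    rw [hat_tmul, outer_mulVec, single_dot, Pi.single_eq_same, one_smul]
  have hrank := LinearMap.finrank_range_add_finrank_ker (hatId r)
  rw [LinearMap.range_eq_top.mpr hsurj, finrank_top] at hrank
  have hT : Module.finrank ℂ (TensorProduct ℂ (Matrix (Fin r) (Fin r) ℂ) (Fin r → ℂ))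
      = r ^ 3 := by
    rw [Module.finrank_tensorProduct, Module.finrank_fin_fun ℂ, Module.finrank_matrix]
    simp [Fintype.card_fin, Module.finrank_self]
    ring
  have hV : Module.finrank ℂ (Fin r → ℂ) = r := Module.finrank_fin_fun ℂ
  rw [hT, hV] at hrank
  refine ⟨heq, ?_⟩
  have : Module.finrank ℂ (NN r) = r ^ 3 - r := by
    rw [← heq]
    omega
  exact this

end WorAux

/-- For `r ≥ 1`, the kernel of `îd_r : M_r(ℂ) ⊗ ℂ^r → ℂ^r`, `a ⊗ η ↦ a η`, equals
the span `N_{id_r}` of the simple tensors `a ⊗ η` with `a` positive semidefinite and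
`a η = 0`; equivalently, this span has dimension `r³ - r`. -/
theorem ker_hatMap_id_eq_Nspace (r : ℕ) (hr : 1 ≤ r) :
    LinearMap.ker
        (hatMap (LinearMap.id : Matrix (Fin r) (Fin r) ℂ →ₗ[ℂ] Matrix (Fin r) (Fin r) ℂ)) =
      Nspace (LinearMap.id : Matrix (Fin r) (Fin r) ℂ →ₗ[ℂ] Matrix (Fin r) (Fin r) ℂ) ∧
    Module.finrank ℂ
        (Nspace (LinearMap.id : Matrix (Fin r) (Fin r) ℂ →ₗ[ℂ] Matrix (Fin r) (Fin r) ℂ)) =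
      r ^ 3 - r := by
  exact WorAux.final r hr

end
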